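/- (Lemma 2.) Let m ≠ n be nonnegative integers, E ⊂ ℝ a closed bounded interval, and Z a continuous map from {λ ∈ ℂ : Re λ ∈ E, 0 ≤ Im λ ≤ ε₁} into ℍ (for some ε₁ > 0) satisfying Z(λ) = φ(Z(λ), Z(λ), 0,…,0, λ) on its domain. Then for every p ∈ (0,1) there exist positive constants ε₀ ≤ ε₁, C and a compact set K ⊂ ℍ × ℍ such that for all (z_1, z_2) ∈ (ℍ × ℍ) \ K, all q_1,…,q_M ∈ ℝ and all λ ∈ R(E, ε₀): μ_p(z_1, z_2, q_1,…,q_M, λ) ≤ C · ∏_{i=1}^{M} (1 + |q_i|^{2(1+p)}), where μ_p is computed with the weight based at s = Z(λ). -/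

import Mathlib

open Complex MeasureTheory

noncomputable section

/-- The iterated map `φ_j(z, q_1,…,q_j, λ)`: `φ_0 = z`,
`φ_j = −1/(φ_{j−1} + λ − q_j + 1)`, where `q_j` is `q (j-1)`. -/
def phiIter (lam : ℂ) (q : ℕ → ℝ) : ℕ → ℂ → ℂ
  | 0, z => z
  | (j+1), z => -1 / (phiIter lam q j z + lam - (q j : ℂ) + 1)

/-- `φ(z₁, z₂, q_1,…,q_M, λ)` with `M = m+n+1`:
`z₁` passes through the `n`-chain with `q_1,…,q_n`, `z₂` through the `m`-chain with
`q_{n+1},…,q_{n+m}`, and `q_M = q (n+m)`. -/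
def phiMap (m n : ℕ) (lam : ℂ) (q : ℕ → ℝ) (z₁ z₂ : ℂ) : ℂ :=
  -1 / (phiIter lam q n z₁ + phiIter lam (fun i => q (n + i)) m z₂ + lam - (q (n + m) : ℂ))

/-- The weight based at `s`: `w_s(z) = |z−s|²/(Im z · Im s)`. -/
def wt (s z : ℂ) : ℝ := ‖z - s‖ ^ 2 / (z.im * s.im)

/-- `μ_p(z₁, z₂, q, λ)`, computed with the weight based at `s`. -/
def muP (m n : ℕ) (p : ℝ) (s lam : ℂ) (q : ℕ → ℝ) (z₁ z₂ : ℂ) : ℝ :=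
  (wt s (phiMap m n lam q z₁ z₂) ^ (1 + p) + wt s (phiMap m n lam q z₂ z₁) ^ (1 + p)) /
    (wt s z₁ ^ (1 + p) + wt s z₂ ^ (1 + p))

/-- The linear polynomials `R_k(z)`: `R_0 = 1`, `R_1 = 1+λ+z`,
`R_{k+1} = (1+λ)R_k − R_{k−1}`, as functions of `z`. -/
def Rfun (lam : ℂ) : ℕ → ℂ → ℂ
  | 0, _ => 1
  | 1, z => 1 + lam + z
  | (k+2), z => (1 + lam) * Rfun lam (k+1) z - Rfun lam k z

/-- `λ` (with associated fixed point `zlam = Z(λ)`) is nondegenerate: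
(a) `R_m, R_n` have no common real zero and their `z`-coefficients do not both vanish;
(b) `R_n(zlam)/R_m(zlam)` is neither real nor purely imaginary. -/
def Nondeg (m n : ℕ) (lam zlam : ℂ) : Prop :=
  (¬ ∃ x : ℝ, Rfun lam m x = 0 ∧ Rfun lam n x = 0) ∧
  (¬ ((Rfun lam m 1 - Rfun lam m 0 = 0) ∧ (Rfun lam n 1 - Rfun lam n 0 = 0))) ∧
  (Rfun lam n zlam / Rfun lam m zlam).im ≠ 0 ∧
  (Rfun lam n zlam / Rfun lam m zlam).re ≠ 0

/-- The strip `R(E,ε) = {λ : Re λ ∈ E, 0 < Im λ ≤ ε}`. -/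
def strip (E : Set ℝ) (ε : ℝ) : Set ℂ := {lam : ℂ | lam.re ∈ E ∧ 0 < lam.im ∧ lam.im ≤ ε}

/-- The closed strip `{λ : Re λ ∈ E, 0 ≤ Im λ ≤ ε}` (domain of `Z`). -/
def closedStrip (E : Set ℝ) (ε : ℝ) : Set ℂ :=
  {lam : ℂ | lam.re ∈ E ∧ 0 ≤ lam.im ∧ lam.im ≤ ε}


lemma wt_eq (s z : ℂ) : wt s z = normSq (z-s) / (z.im * s.im) := by
  rw [wt, Complex.sq_norm]

lemma im_le_wt (s z : ℂ) (hs : 0 < s.im) (hz : 0 < z.im) :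
    s.im ≤ 4 * z.im * (wt s z + 1) := by
  have h : (z.im - s.im)^2 ≤ normSq (z - s) := by
    simp only [Complex.normSq_apply, Complex.sub_re, Complex.sub_im]
    nlinarith [sq_nonneg (z.re - s.re)]
  have key : s.im^2 ≤ 4*normSq (z-s) + 4*(z.im*s.im) := by
    nlinarith [sq_nonneg (s.im - 2*z.im)]
  rw [wt_eq]
  have hzs : (0:ℝ) < z.im * s.im := by positivity
  rw [div_add' _ _ _ (ne_of_gt hzs), ← mul_div_assoc, le_div_iff₀ hzs]
  nlinarith

lemma wt_neg_inv (s z : ℂ) (hs : 0 < s.im) (hz : 0 < z.im) :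
    wt s (-1/z) = wt (-1/s) z := by
  have hz0 : z ≠ 0 := by intro h0; simp [h0] at hz
  have hs0 : s ≠ 0 := by intro h0; simp [h0] at hs
  rw [wt_eq, wt_eq]
  have h1 : (-1/z - s) = -(1 + s*z)/z := by field_simp; ring
  have h2 : (z - (-1/s)) = (1 + s*z)/s := by field_simp; ring
  rw [h1, h2]
  have i1 : (-1/z).im = z.im / normSq z := by
    simp [Complex.div_im, Complex.inv_im]; ring
  have i2 : (-1/s).im = s.im / normSq s := by
    simp [Complex.div_im, Complex.inv_im]; ring
  rw [i1, i2]
  rw [Complex.normSq_div, Complex.normSq_div, Complex.normSq_neg]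
  have n1 : normSq z ≠ 0 := by simpa using hz0
  have n2 : normSq s ≠ 0 := by simpa using hs0
  field_simp

lemma wt_base (s s' z : ℂ) (hs : 0 < s.im) (hs' : 0 < s'.im) (hz : 0 < z.im) :
    wt s' z ≤ (2*(s.im/s'.im) + 8*normSq (s-s')/(s.im*s'.im)) * (wt s z + 1) := by
  have hN' : normSq (z - s') ≤ 2*normSq (z-s) + 2*normSq (s-s') := by
    have : z - s' = (z - s) + (s - s') := by ring
    rw [this]
    simp only [Complex.normSq_apply, Complex.add_re, Complex.add_im]
    nlinarith [sq_nonneg ((z-s).re - (s-s').re), sq_nonneg ((z-s).im - (s-s').im)]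
  have key : s.im^2 ≤ 4*normSq (z-s) + 4*(z.im*s.im) := by
    have h : (z.im - s.im)^2 ≤ normSq (z - s) := by
      simp only [Complex.normSq_apply, Complex.sub_re, Complex.sub_im]
      nlinarith [sq_nonneg (z.re - s.re)]
    nlinarith [sq_nonneg (s.im - 2*z.im)]
  rw [wt_eq, wt_eq]
  have h1 : z.im * s.im ≠ 0 := by positivity
  have h2 : z.im * s'.im ≠ 0 := by positivity
  have h3 : s.im ≠ 0 := ne_of_gt hs
  have h4 : s'.im ≠ 0 := ne_of_gt hs'
  have h5 : z.im ≠ 0 := ne_of_gt hz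
  rw [div_le_iff₀ (by positivity : (0:ℝ) < z.im * s'.im)]
  have expand : (2*(s.im/s'.im) + 8*normSq (s-s')/(s.im*s'.im)) * (normSq (z-s)/(z.im*s.im) + 1) * (z.im*s'.im)
      = (2*s.im^2 + 8*normSq (s-s')) * (normSq (z-s) + z.im*s.im) / (s.im^2) := by
    field_simp
  rw [expand, le_div_iff₀ (by positivity : (0:ℝ) < s.im^2)]
  nlinarith [Complex.normSq_nonneg (s-s'), Complex.normSq_nonneg (z-s), mul_pos hz hs]

lemma wt_shift (s z c : ℂ) (hs : 0 < s.im) (hz : 0 < z.im) (hc : 0 ≤ c.im) :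
    wt s (z + c) ≤ (2 + 8 * normSq c / s.im^2) * (wt s z + 1) := by
  have hN : normSq (z + c - s) ≤ 2*normSq (z-s) + 2*normSq c := by
    have : z + c - s = (z - s) + c := by ring
    rw [this]
    simp only [Complex.normSq_apply, Complex.add_re, Complex.add_im]
    nlinarith [sq_nonneg ((z-s).re - c.re), sq_nonneg ((z-s).im - c.im)]
  have key : s.im^2 ≤ 4*normSq (z-s) + 4*(z.im*s.im) := by
    have h : (z.im - s.im)^2 ≤ normSq (z - s) := by
      simp only [Complex.normSq_apply, Complex.sub_re, Complex.sub_im]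
      nlinarith [sq_nonneg (z.re - s.re)]
    nlinarith [sq_nonneg (s.im - 2*z.im)]
  rw [wt_eq, wt_eq]
  have him : (z+c).im = z.im + c.im := by simp
  rw [him]
  have step1 : normSq (z + c - s) / ((z.im + c.im) * s.im)
      ≤ normSq (z + c - s) / (z.im * s.im) := by
    apply div_le_div_of_nonneg_left (Complex.normSq_nonneg _) (by positivity)
    nlinarith
  refine step1.trans ?_
  have h3 : s.im ≠ 0 := ne_of_gt hs
  have h5 : z.im ≠ 0 := ne_of_gt hz
  rw [div_le_iff₀ (by positivity : (0:ℝ) < z.im * s.im)]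
  have expand : (2 + 8*normSq c/s.im^2) * (normSq (z-s)/(z.im*s.im) + 1) * (z.im*s.im)
      = (2*s.im^2 + 8*normSq c) * (normSq (z-s) + z.im*s.im) / (s.im^2) := by
    field_simp
  rw [expand, le_div_iff₀ (by positivity : (0:ℝ) < s.im^2)]
  nlinarith [Complex.normSq_nonneg c, Complex.normSq_nonneg (z-s), mul_pos hz hs]


lemma normSq_add3 (x y z : ℂ) : normSq (x+y+z) ≤ 3*normSq x + 3*normSq y + 3*normSq z := by
  simp only [Complex.normSq_apply, Complex.add_re, Complex.add_im]
  nlinarith [sq_nonneg (x.re - y.re), sq_nonneg (x.im - y.im), sq_nonneg (x.re - z.re),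
    sq_nonneg (x.im - z.im), sq_nonneg (y.re - z.re), sq_nonneg (y.im - z.im)]

lemma wt_nonneg' (s z : ℂ) (hs : 0 < s.im) (hz : 0 < z.im) : 0 ≤ wt s z := by
  rw [wt_eq]; exact div_nonneg (Complex.normSq_nonneg _) (mul_pos hz hs).le

lemma wt_shift2 (s u v c : ℂ) (hs : 0 < s.im) (hu : 0 < u.im) (hv : 0 < v.im) (hc : 0 ≤ c.im) :
    wt s (u + v + c) ≤ (3 + 12 * normSq (c+s) / s.im^2) * (wt s u + wt s v + 1) := by
  have hN : normSq (u + v + c - s) ≤ 3*normSq (u-s) + 3*normSq (v-s) + 3*normSq (c+s) := by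
    have e : u + v + c - s = (u - s) + (v - s) + (c + s) := by ring
    rw [e]; exact normSq_add3 _ _ _
  have him : (u+v+c).im = u.im + v.im + c.im := by simp
  have htim : 0 < (u+v+c).im := by rw [him]; positivity
  have step1 : wt s (u+v+c) ≤ (3*normSq (u-s) + 3*normSq (v-s) + 3*normSq (c+s)) / ((u+v+c).im * s.im) := by
    rw [wt_eq]
    exact div_le_div_of_nonneg_right hN (by positivity) |>.trans_eq rfl
  have split : (3*normSq (u-s) + 3*normSq (v-s) + 3*normSq (c+s)) / ((u+v+c).im * s.im)
      ≤ 3*normSq (u-s)/(u.im*s.im) + 3*normSq (v-s)/(v.im*s.im) + 3*normSq (c+s)/(u.im*s.im) := by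
    rw [him]
    have e : (3*normSq (u-s) + 3*normSq (v-s) + 3*normSq (c+s)) / ((u.im + v.im + c.im) * s.im)
        = 3*normSq (u-s)/((u.im + v.im + c.im) * s.im) + 3*normSq (v-s)/((u.im + v.im + c.im) * s.im)
          + 3*normSq (c+s)/((u.im + v.im + c.im) * s.im) := by ring
    rw [e]
    gcongr
    · linarith [Complex.normSq_nonneg (u-s)]
    · nlinarith
    · linarith [Complex.normSq_nonneg (v-s)]
    · nlinarith
    · linarith [Complex.normSq_nonneg (c+s)]
    · nlinarith
  have hwu : 3*normSq (u-s)/(u.im*s.im) = 3 * wt s u := by rw [wt_eq]; ring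
  have hwv : 3*normSq (v-s)/(v.im*s.im) = 3 * wt s v := by rw [wt_eq]; ring
  have hwu0 : (0:ℝ) ≤ wt s u := wt_nonneg' s u hs hu
  have hwv0 : (0:ℝ) ≤ wt s v := wt_nonneg' s v hs hv
  have hq : 3*normSq (c+s)/(u.im*s.im) ≤ 12*normSq (c+s)/s.im^2 * (wt s u + 1) := by
    have him2 : s.im ≤ 4 * u.im * (wt s u + 1) := im_le_wt s u hs hu
    have e : 12*normSq (c+s)/s.im^2 * (wt s u + 1) = (12*normSq (c+s)*(wt s u + 1))/s.im^2 := by ring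
    rw [e, div_le_div_iff₀ (by positivity) (by positivity)]
    nlinarith [mul_le_mul_of_nonneg_left him2
      (mul_nonneg (mul_nonneg (by norm_num) (Complex.normSq_nonneg (c+s))) hs.le
        : (0:ℝ) ≤ 3*normSq (c+s)*s.im)]
  have hq0 : (0:ℝ) ≤ 12*normSq (c+s)/s.im^2 :=
    div_nonneg (by linarith [Complex.normSq_nonneg (c+s)]) (sq_nonneg _)
  calc wt s (u+v+c) ≤ (3*normSq (u-s) + 3*normSq (v-s) + 3*normSq (c+s)) / ((u+v+c).im * s.im) := step1
    _ ≤ 3*normSq (u-s)/(u.im*s.im) + 3*normSq (v-s)/(v.im*s.im) + 3*normSq (c+s)/(u.im*s.im) := split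
    _ ≤ 3 * wt s u + 3 * wt s v + 12*normSq (c+s)/s.im^2 * (wt s u + 1) := by
        rw [hwu, hwv]; gcongr
    _ ≤ (3 + 12 * normSq (c+s) / s.im^2) * (wt s u + wt s v + 1) := by
        nlinarith [mul_nonneg hq0 hwv0]

lemma im_neg_inv (w : ℂ) (hw : 0 < w.im) : 0 < (-1/w).im := by
  have hw0 : w ≠ 0 := by intro h0; simp [h0] at hw
  have : (-1/w).im = w.im / normSq w := by
    simp [Complex.div_im, Complex.inv_im]; ring
  rw [this]
  exact div_pos hw (Complex.normSq_pos.mpr hw0)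

lemma wt_inv_step (τ R : ℝ) (hτ : 0 < τ) (s w : ℂ) (hs1 : τ ≤ s.im)
    (hsR : ‖s‖ ≤ R) (hw : 0 < w.im) :
    wt s (-1/w) ≤ (2*R^2 + 8*R^2*(R+1/τ)^2/τ^2) * (wt s w + 1) := by
  have hs : 0 < s.im := lt_of_lt_of_le hτ hs1
  have hs0 : s ≠ 0 := by intro h0; simp [h0] at hs
  have hR : 0 < R := lt_of_lt_of_le hτ (hs1.trans ((le_abs_self _).trans (Complex.abs_im_le_norm s)) |>.trans hsR)
  have habs : τ ≤ ‖s‖ :=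
    hs1.trans (le_trans (le_abs_self _) (Complex.abs_im_le_norm s))
  have hsim' : 0 < (-1/s).im := im_neg_inv s hs
  have e1 : (-1/s).im = s.im / normSq s := by
    simp [Complex.div_im, Complex.inv_im]; ring
  have hnspos : 0 < normSq s := Complex.normSq_pos.mpr hs0
  have hnsR : normSq s ≤ R^2 := by
    rw [← Complex.sq_norm]; exact pow_le_pow_left₀ (norm_nonneg s) hsR 2
  have coef1 : s.im/(-1/s).im = normSq s := by
    rw [e1]; field_simp
  have hden : τ^2/R^2 ≤ s.im*(-1/s).im := by
    rw [e1, show s.im*(s.im/normSq s) = s.im^2/normSq s from by ring]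
    exact div_le_div₀ (sq_nonneg _) (pow_le_pow_left₀ hτ.le hs1 2) hnspos hnsR
  have hnum : normSq (s - (-1/s)) ≤ (R + 1/τ)^2 := by
    have e : s - (-1/s) = s + s⁻¹ := by field_simp; ring
    rw [e, ← Complex.sq_norm]
    have h1 : ‖s + s⁻¹‖ ≤ R + 1/τ := by
      calc ‖s + s⁻¹‖ ≤ ‖s‖ + ‖s⁻¹‖ :=
            norm_add_le _ _
        _ ≤ R + 1/τ := by
            rw [norm_inv]
            exact add_le_add hsR (by
              rw [one_div]
              exact inv_anti₀ hτ habs)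
    exact pow_le_pow_left₀ (norm_nonneg _) h1 2
  have hw1 : 0 ≤ wt s w + 1 := by linarith [wt_nonneg' s w hs hw]
  rw [wt_neg_inv s w hs hw]
  refine (wt_base s (-1/s) w hs hsim' hw).trans ?_
  apply mul_le_mul_of_nonneg_right _ hw1
  have t1 : 2*(s.im/(-1/s).im) ≤ 2*R^2 := by rw [coef1]; linarith
  have t2 : 8*normSq (s - (-1/s))/(s.im*(-1/s).im) ≤ 8*R^2*(R+1/τ)^2/τ^2 := by
    have h8 : 8*normSq (s - (-1/s)) ≤ 8*(R+1/τ)^2 := by linarith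
    calc 8*normSq (s - (-1/s))/(s.im*(-1/s).im) ≤ (8*(R+1/τ)^2)/(τ^2/R^2) := by
          apply div_le_div₀ (by positivity) h8 (by positivity) hden
      _ = 8*R^2*(R+1/τ)^2/τ^2 := by field_simp
  linarith

lemma step_im (z lam : ℂ) (q : ℝ) (hz : 0 < z.im) (hlam : 0 < lam.im) :
    0 < (-1/(z + lam - (q:ℂ) + 1)).im := by
  apply im_neg_inv
  simp only [Complex.add_im, Complex.sub_im, Complex.ofReal_im, Complex.one_im]
  linarith

lemma iter_step (τ R L : ℝ) (hτ : 0 < τ) (hL : 0 ≤ L) (s lam : ℂ)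
    (hs1 : τ ≤ s.im) (hsR : ‖s‖ ≤ R) (hlam : 0 < lam.im)
    (hlamL : ‖lam‖ ≤ L) (q : ℝ) (z : ℂ) (hz : 0 < z.im) :
    wt s (-1/(z + lam - (q:ℂ) + 1)) ≤
      ((2*R^2 + 8*R^2*(R+1/τ)^2/τ^2) * ((2 + 8*(2*(L+1)^2+2)/τ^2) + 1))
        * (1+q^2) * (wt s z + 1) := by
  have hs : 0 < s.im := lt_of_lt_of_le hτ hs1
  set c : ℂ := lam - (q:ℂ) + 1 with hc
  have e : z + lam - (q:ℂ) + 1 = z + c := by rw [hc]; ring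
  have hcim : 0 ≤ c.im := by
    rw [hc]
    simp only [Complex.add_im, Complex.sub_im, Complex.ofReal_im, Complex.one_im]
    linarith
  have hQ : normSq c ≤ (2*(L+1)^2+2)*(1+q^2) := by
    have habsc : ‖c‖ ≤ L + 1 + |q| := by
      have e2 : c = lam + ((1 - q : ℝ) : ℂ) := by rw [hc]; push_cast; ring
      rw [e2]
      calc ‖lam + ((1 - q : ℝ) : ℂ)‖
          ≤ ‖lam‖ + ‖((1 - q : ℝ) : ℂ)‖ := norm_add_le _ _
        _ ≤ L + (1 + |q|) := by
            rw [Complex.norm_real, Real.norm_eq_abs]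
            exact add_le_add hlamL ((abs_sub _ _).trans (by simp))
        _ = L + 1 + |q| := by ring
    rw [← Complex.sq_norm]
    have h2 : ‖c‖ ^ 2 ≤ (L + 1 + |q|)^2 :=
      pow_le_pow_left₀ (norm_nonneg _) habsc 2
    have hq2 : |q|^2 = q^2 := sq_abs q
    nlinarith [sq_nonneg (L + 1 - |q|), abs_nonneg q]
  have hW0 : 0 ≤ wt s z := wt_nonneg' s z hs hz
  have hzc : 0 < (z + c).im := by
    simp only [Complex.add_im]
    linarith [hcim, show c.im = lam.im from by
      rw [hc]; simp only [Complex.add_im, Complex.sub_im, Complex.ofReal_im, Complex.one_im]; linarith]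
  have shift : wt s (z + c) ≤ (2 + 8*(2*(L+1)^2+2)/τ^2) * (1+q^2) * (wt s z + 1) := by
    refine (wt_shift s z c hs hz hcim).trans ?_
    have hcoef : 2 + 8 * normSq c / s.im^2 ≤ (2 + 8*(2*(L+1)^2+2)/τ^2) * (1+q^2) := by
      have h1 : 8 * normSq c / s.im^2 ≤ 8*(2*(L+1)^2+2)*(1+q^2)/τ^2 := by
        apply div_le_div₀ (by positivity) (by linarith) (by positivity)
        exact pow_le_pow_left₀ hτ.le hs1 2
      have expand : (2 + 8*(2*(L+1)^2+2)/τ^2)*(1+q^2)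
          = 2*(1+q^2) + 8*(2*(L+1)^2+2)*(1+q^2)/τ^2 := by ring
      rw [expand]
      linarith [sq_nonneg q]
    exact mul_le_mul_of_nonneg_right hcoef (by linarith)
  rw [e]
  have inv := wt_inv_step τ R hτ s (z+c) hs1 hsR hzc
  have hone : (1:ℝ) ≤ (1+q^2)*(wt s z + 1) := by nlinarith [sq_nonneg q]
  have h2 : wt s (z+c) + 1 ≤ ((2 + 8*(2*(L+1)^2+2)/τ^2) + 1) * ((1+q^2)*(wt s z+1)) := by
    nlinarith [shift]
  calc wt s (-1/(z+c)) ≤ (2*R^2 + 8*R^2*(R+1/τ)^2/τ^2) * (wt s (z+c) + 1) := inv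
    _ ≤ (2*R^2 + 8*R^2*(R+1/τ)^2/τ^2) * (((2 + 8*(2*(L+1)^2+2)/τ^2) + 1) * ((1+q^2)*(wt s z+1))) :=
        mul_le_mul_of_nonneg_left h2 (by positivity)
    _ = ((2*R^2 + 8*R^2*(R+1/τ)^2/τ^2) * ((2 + 8*(2*(L+1)^2+2)/τ^2) + 1)) * (1+q^2) * (wt s z + 1) := by
        ring

lemma final_step (τ R L : ℝ) (hτ : 0 < τ) (hL : 0 ≤ L) (s lam : ℂ)
    (hs1 : τ ≤ s.im) (hsR : ‖s‖ ≤ R) (hlam : 0 < lam.im)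
    (hlamL : ‖lam‖ ≤ L) (q : ℝ) (u v : ℂ) (hu : 0 < u.im) (hv : 0 < v.im) :
    wt s (-1/(u + v + lam - (q:ℂ))) ≤
      ((2*R^2 + 8*R^2*(R+1/τ)^2/τ^2) * ((3 + 12*(2*(L+R)^2+2)/τ^2) + 1))
        * (1+q^2) * (wt s u + wt s v + 1) := by
  have hs : 0 < s.im := lt_of_lt_of_le hτ hs1
  have hR : 0 ≤ R := (norm_nonneg s).trans hsR
  set c : ℂ := lam - (q:ℂ) with hc
  have e : u + v + lam - (q:ℂ) = u + v + c := by rw [hc]; ring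
  have hcim : 0 ≤ c.im := by
    rw [hc]; simp only [Complex.sub_im, Complex.ofReal_im]; linarith
  have hQ : normSq (c+s) ≤ (2*(L+R)^2+2)*(1+q^2) := by
    have habsc : ‖c+s‖ ≤ L + R + |q| := by
      have e2 : c + s = lam + s + ((-q : ℝ) : ℂ) := by rw [hc]; push_cast; ring
      rw [e2]
      calc ‖lam + s + ((-q : ℝ) : ℂ)‖
          ≤ ‖lam + s‖ + ‖((-q:ℝ) : ℂ)‖ := norm_add_le _ _
        _ ≤ (‖lam‖ + ‖s‖) + |q| := by
            rw [Complex.norm_real, Real.norm_eq_abs, abs_neg]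
            exact add_le_add_left (norm_add_le lam s) _
        _ ≤ L + R + |q| := by linarith
    rw [← Complex.sq_norm]
    have h2 : ‖c+s‖ ^ 2 ≤ (L + R + |q|)^2 :=
      pow_le_pow_left₀ (norm_nonneg _) habsc 2
    have hq2 : |q|^2 = q^2 := sq_abs q
    nlinarith [sq_nonneg (L + R - |q|), abs_nonneg q]
  have hWu : 0 ≤ wt s u := wt_nonneg' s u hs hu
  have hWv : 0 ≤ wt s v := wt_nonneg' s v hs hv
  have hcim' : c.im = lam.im := by
    rw [hc]; simp only [Complex.sub_im, Complex.ofReal_im]; ring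
  have hzc : 0 < (u + v + c).im := by
    simp only [Complex.add_im, hcim']; linarith
  have shift : wt s (u + v + c) ≤
      (3 + 12*(2*(L+R)^2+2)/τ^2) * (1+q^2) * (wt s u + wt s v + 1) := by
    refine (wt_shift2 s u v c hs hu hv hcim).trans ?_
    have hcoef : 3 + 12 * normSq (c+s) / s.im^2 ≤ (3 + 12*(2*(L+R)^2+2)/τ^2) * (1+q^2) := by
      have h1 : 12 * normSq (c+s) / s.im^2 ≤ 12*(2*(L+R)^2+2)*(1+q^2)/τ^2 := by
        apply div_le_div₀ (by positivity) (by linarith) (by positivity)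
        exact pow_le_pow_left₀ hτ.le hs1 2
      have expand : (3 + 12*(2*(L+R)^2+2)/τ^2)*(1+q^2)
          = 3*(1+q^2) + 12*(2*(L+R)^2+2)*(1+q^2)/τ^2 := by ring
      rw [expand]
      linarith [sq_nonneg q]
    exact mul_le_mul_of_nonneg_right hcoef (by linarith)
  rw [e]
  have inv := wt_inv_step τ R hτ s (u+v+c) hs1 hsR hzc
  have h2 : wt s (u+v+c) + 1 ≤
      ((3 + 12*(2*(L+R)^2+2)/τ^2) + 1) * ((1+q^2)*(wt s u + wt s v + 1)) := by
    nlinarith [shift]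
  calc wt s (-1/(u+v+c)) ≤ (2*R^2 + 8*R^2*(R+1/τ)^2/τ^2) * (wt s (u+v+c) + 1) := inv
    _ ≤ (2*R^2 + 8*R^2*(R+1/τ)^2/τ^2) * (((3 + 12*(2*(L+R)^2+2)/τ^2) + 1) * ((1+q^2)*(wt s u + wt s v + 1))) :=
        mul_le_mul_of_nonneg_left h2 (by positivity)
    _ = ((2*R^2 + 8*R^2*(R+1/τ)^2/τ^2) * ((3 + 12*(2*(L+R)^2+2)/τ^2) + 1))
        * (1+q^2) * (wt s u + wt s v + 1) := by ring


lemma chain (τ R L : ℝ) (hτ : 0 < τ) (hL : 0 ≤ L) (s lam : ℂ)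
    (hs1 : τ ≤ s.im) (hsR : ‖s‖ ≤ R) (hlam : 0 < lam.im)
    (hlamL : ‖lam‖ ≤ L) (q : ℕ → ℝ) (j : ℕ) (z : ℂ) (hz : 0 < z.im) :
    0 < (phiIter lam q j z).im ∧
      wt s (phiIter lam q j z) + 1 ≤
        ((2*R^2 + 8*R^2*(R+1/τ)^2/τ^2) * ((2 + 8*(2*(L+1)^2+2)/τ^2) + 1) + 1)^j
          * (∏ i ∈ Finset.range j, (1 + (q i)^2)) * (wt s z + 1) := by
  have hs : 0 < s.im := lt_of_lt_of_le hτ hs1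
  set A : ℝ := (2*R^2 + 8*R^2*(R+1/τ)^2/τ^2) * ((2 + 8*(2*(L+1)^2+2)/τ^2) + 1) with hA
  have hA0 : 0 ≤ A := by rw [hA]; positivity
  induction j with
  | zero =>
    refine ⟨hz, ?_⟩
    simp only [phiIter, pow_zero, Finset.range_zero, Finset.prod_empty, one_mul, mul_one]
    exact le_refl _
  | succ j ih =>
    obtain ⟨him, hw⟩ := ih
    constructor
    · show 0 < (-1 / (phiIter lam q j z + lam - (q j : ℂ) + 1)).im
      exact step_im _ lam (q j) him hlam
    · have step := iter_step τ R L hτ hL s lam hs1 hsR hlam hlamL (q j)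
        (phiIter lam q j z) him
      have hWj : 0 ≤ wt s (phiIter lam q j z) := wt_nonneg' _ _ hs him
      have hW0 : 0 ≤ wt s z := wt_nonneg' _ _ hs hz
      have e : phiIter lam q (j+1) z = -1 / (phiIter lam q j z + lam - (q j : ℂ) + 1) := rfl
      rw [e]
      calc wt s (-1 / (phiIter lam q j z + lam - (q j : ℂ) + 1)) + 1
          ≤ A * (1 + (q j)^2) * (wt s (phiIter lam q j z) + 1) + 1 := by
            rw [hA]; linarith [step]
        _ ≤ (A+1) * (1 + (q j)^2) * (wt s (phiIter lam q j z) + 1) := by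
            nlinarith [sq_nonneg (q j)]
        _ ≤ (A+1) * (1 + (q j)^2) * ((A+1)^j * (∏ i ∈ Finset.range j, (1 + (q i)^2)) * (wt s z + 1)) := by
            apply mul_le_mul_of_nonneg_left hw
            positivity
        _ = (A+1)^(j+1) * (∏ i ∈ Finset.range (j+1), (1 + (q i)^2)) * (wt s z + 1) := by
            rw [Finset.prod_range_succ, pow_succ]
            ring


lemma two_rpow_le_four {r : ℝ} (hr2 : r ≤ 2) : (2:ℝ)^r ≤ 4 := by
  have h : (2:ℝ)^r ≤ (2:ℝ)^(2:ℝ) := Real.rpow_le_rpow_of_exponent_le one_le_two hr2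
  have e : (2:ℝ)^(2:ℝ) = 4 := by
    rw [show (2:ℝ) = ((2:ℕ):ℝ) from by norm_num, Real.rpow_natCast]; norm_num
  linarith

lemma rpow_one_add (q r : ℝ) (hr1 : 1 ≤ r) (hr2 : r ≤ 2) :
    (1+q^2)^r ≤ 4*(1+|q|^(2*r)) := by
  have hr0 : 0 ≤ r := by linarith
  have hq0 : (0:ℝ) ≤ |q|^(2*r) := Real.rpow_nonneg (abs_nonneg q) _
  rcases le_total (q^2) 1 with h | h
  · have h1 : (1+q^2)^r ≤ (2:ℝ)^r :=
      Real.rpow_le_rpow (by positivity) (by linarith) hr0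
    have := two_rpow_le_four hr2
    linarith
  · have h1 : (1+q^2)^r ≤ (2*q^2)^r :=
      Real.rpow_le_rpow (by positivity) (by linarith) hr0
    have h2 : (2*q^2)^r = 2^r * (q^2)^r :=
      Real.mul_rpow (by norm_num) (sq_nonneg q)
    have h3 : (q^2)^r = |q|^(2*r) := by
      rw [← _root_.sq_abs q, ← Real.rpow_natCast |q| 2, ← Real.rpow_mul (abs_nonneg q)]
      norm_num
    have h4 : 2^r * (q^2)^r ≤ 4 * (q^2)^r := by
      apply mul_le_mul_of_nonneg_right (two_rpow_le_four hr2)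
      positivity
    rw [h3] at h4 h2
    linarith

lemma prod_rpow_le (q : ℕ → ℝ) (M : ℕ) (r : ℝ) (hr1 : 1 ≤ r) (hr2 : r ≤ 2) :
    (∏ i ∈ Finset.range M, (1+(q i)^2))^r ≤
      4^M * ∏ i ∈ Finset.range M, (1+|q i|^(2*r)) := by
  have h1 : (∏ i ∈ Finset.range M, (1+(q i)^2))^r
      = ∏ i ∈ Finset.range M, ((1+(q i)^2))^r := by
    rw [← Real.finset_prod_rpow _ _ (fun i _ => by positivity) r]
  rw [h1]
  calc ∏ i ∈ Finset.range M, ((1+(q i)^2))^r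
      ≤ ∏ i ∈ Finset.range M, (4*(1+|q i|^(2*r))) := by
        apply Finset.prod_le_prod
        · intro i _; positivity
        · intro i _; exact rpow_one_add (q i) r hr1 hr2
    _ = 4^M * ∏ i ∈ Finset.range M, (1+|q i|^(2*r)) := by
        rw [Finset.prod_mul_distrib, Finset.prod_const, Finset.card_range]

lemma sum_rpow_le (x y r : ℝ) (hx : 0 ≤ x) (hy : 0 ≤ y) (hr1 : 1 ≤ r) (hr2 : r ≤ 2) :
    (x+y+2)^r ≤ 16*(x^r + y^r + 1) := by
  have hr0 : 0 ≤ r := by linarith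
  set X := max x (max y 1) with hX
  have hx1 : x ≤ X := le_max_left _ _
  have hy1 : y ≤ X := le_trans (le_max_left _ _) (le_max_right _ _)
  have h11 : (1:ℝ) ≤ X := le_trans (le_max_right _ _) (le_max_right _ _)
  have hX0 : 0 ≤ X := by linarith
  have h1 : (x+y+2)^r ≤ (4*X)^r :=
    Real.rpow_le_rpow (by linarith) (by linarith) hr0
  have h2 : (4*X)^r = 4^r * X^r := Real.mul_rpow (by norm_num) hX0
  have h4 : (4:ℝ)^r ≤ 16 := by
    have : (4:ℝ)^r ≤ (4:ℝ)^(2:ℝ) :=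
      Real.rpow_le_rpow_of_exponent_le (by norm_num) hr2
    have e : (4:ℝ)^(2:ℝ) = 16 := by
      rw [show (2:ℝ) = ((2:ℕ):ℝ) from by norm_num, Real.rpow_natCast]; norm_num
    linarith
  have hXr : X^r ≤ x^r + y^r + 1 := by
    have hxr : 0 ≤ x^r := Real.rpow_nonneg hx _
    have hyr : 0 ≤ y^r := Real.rpow_nonneg hy _
    rcases max_cases x (max y 1) with ⟨e1, _⟩ | ⟨e1, _⟩
    · rw [hX, e1]; linarith
    · rcases max_cases y 1 with ⟨e2, _⟩ | ⟨e2, _⟩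
      · rw [hX, e1, e2]; linarith
      · rw [hX, e1, e2, Real.one_rpow]; linarith
  have hXr0 : 0 ≤ X^r := Real.rpow_nonneg hX0 _
  calc (x+y+2)^r ≤ 4^r * X^r := by rw [← h2]; exact h1
    _ ≤ 16 * X^r := mul_le_mul_of_nonneg_right h4 hXr0
    _ ≤ 16 * (x^r + y^r + 1) := by linarith

lemma wt_ge_one (τ R : ℝ) (hτ : 0 < τ) (s z : ℂ) (hs1 : τ ≤ s.im)
    (hsR : ‖s‖ ≤ R) (hz : 0 < z.im)
    (h : z.im < τ/4 ∨ 3*R+1 < ‖z‖) : 1 ≤ wt s z := by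
  have hs : 0 < s.im := lt_of_lt_of_le hτ hs1
  have hR0 : 0 ≤ R := (norm_nonneg s).trans hsR
  have hsim : s.im ≤ R := le_trans (le_trans (le_abs_self _) (Complex.abs_im_le_norm s)) hsR
  rw [wt_eq, le_div_iff₀ (by positivity)]
  rcases h with h | h
  · have hN : (z.im - s.im)^2 ≤ normSq (z - s) := by
      simp only [Complex.normSq_apply, Complex.sub_re, Complex.sub_im]
      nlinarith [sq_nonneg (z.re - s.re)]
    nlinarith [sq_nonneg (s.im - 2*z.im)]
  · have hzim : z.im ≤ ‖z‖ :=
      le_trans (le_abs_self _) (Complex.abs_im_le_norm z)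
    have hN : (‖z‖ - ‖s‖)^2 ≤ normSq (z - s) := by
      rw [← Complex.sq_norm]
      apply pow_le_pow_left₀ ?_ ?_ 2
      · linarith
      · have := norm_sub_norm_le z s
        simpa using this
    nlinarith [norm_nonneg z, norm_nonneg s]


lemma prod_subset_le (f : ℕ → ℝ) (T U : Finset ℕ) (hTU : T ⊆ U) (h1 : ∀ i, 1 ≤ f i) :
    ∏ i ∈ T, f i ≤ ∏ i ∈ U, f i := by
  have hone : (1:ℝ) ≤ ∏ i ∈ U \ T, f i := by
    calc (1:ℝ) = ∏ _i ∈ U \ T, (1:ℝ) := by simp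
      _ ≤ ∏ i ∈ U \ T, f i := Finset.prod_le_prod (by simp) (fun i _ => h1 i)
  have hT0 : 0 ≤ ∏ i ∈ T, f i := Finset.prod_nonneg (fun i _ => le_trans zero_le_one (h1 i))
  calc ∏ i ∈ T, f i = 1 * ∏ i ∈ T, f i := (one_mul _).symm
    _ ≤ (∏ i ∈ U \ T, f i) * ∏ i ∈ T, f i := mul_le_mul_of_nonneg_right hone hT0
    _ = ∏ i ∈ U, f i := Finset.prod_sdiff hTU


set_option maxHeartbeats 1000000 in
/-- **Lemma 2.** Let `m ≠ n`, `E = [a,b]`, and `Z` a continuous map from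
the closed strip of height `ε₁` over `E` into `ℍ` satisfying the fixed point equation.
Then for every `p ∈ (0,1)` there are positive constants `ε₀ ≤ ε₁`, `C` and a compact
`K ⊂ ℍ×ℍ` such that for all `(z₁,z₂) ∈ (ℍ×ℍ) \ K`, all `q_1,…,q_M ∈ ℝ` and all
`λ ∈ R(E,ε₀)`: `μ_p(z₁,z₂,q,λ) ≤ C·∏_{i=1}^M (1+|q_i|^{2(1+p)})`
(weight based at `s = Z(λ)`). -/
theorem statement3 (m n : ℕ) (hmn : m ≠ n) (a b : ℝ) (hab : a ≤ b)
    (ε₁ : ℝ) (hε₁ : 0 < ε₁) (Z : ℂ → ℂ)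
    (hZcont : ContinuousOn Z (closedStrip (Set.Icc a b) ε₁))
    (hZim : ∀ lam ∈ closedStrip (Set.Icc a b) ε₁, 0 < (Z lam).im)
    (hZfix : ∀ lam ∈ closedStrip (Set.Icc a b) ε₁,
      Z lam = phiMap m n lam (fun _ => 0) (Z lam) (Z lam))
    (p : ℝ) (hp : 0 < p) (hp1 : p < 1) :
    ∃ ε₀ : ℝ, 0 < ε₀ ∧ ε₀ ≤ ε₁ ∧ ∃ C > (0 : ℝ),
      ∃ K : Set (ℂ × ℂ), IsCompact K ∧
        K ⊆ {z : ℂ × ℂ | 0 < z.1.im ∧ 0 < z.2.im} ∧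
        ∀ z₁ z₂ : ℂ, 0 < z₁.im → 0 < z₂.im → (z₁, z₂) ∉ K →
          ∀ q : ℕ → ℝ, ∀ lam ∈ strip (Set.Icc a b) ε₀,
            muP m n p (Z lam) lam q z₁ z₂ ≤
              C * ∏ i ∈ Finset.range (m + n + 1), (1 + |q i| ^ (2 * (1 + p))) := by
  classical
  set r : ℝ := 1 + p with hr
  have hr1 : 1 ≤ r := by rw [hr]; linarith
  have hr2 : r ≤ 2 := by rw [hr]; linarith
  have hr0 : 0 ≤ r := by linarith
  -- the compact set of base points
  set D : Set ℂ := closedStrip (Set.Icc a b) ε₁ with hD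
  have hDcomp : IsCompact D := by
    apply Metric.isCompact_of_isClosed_isBounded
    · have e : D = Complex.re ⁻¹' (Set.Icc a b) ∩ Complex.im ⁻¹' (Set.Icc 0 ε₁) := by
        ext lam; simp [hD, closedStrip, Set.mem_Icc]
      rw [e]
      exact (isClosed_Icc.preimage Complex.continuous_re).inter
        (isClosed_Icc.preimage Complex.continuous_im)
    · apply Bornology.IsBounded.subset
        (Metric.isBounded_closedBall (x := (0:ℂ)) (r := |a|+|b|+|ε₁|))
      intro z hz
      obtain ⟨h1, h2, h3⟩ := hz
      simp only [Metric.mem_closedBall, Complex.dist_eq, sub_zero]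
      calc ‖z‖ ≤ |z.re| + |z.im| := Complex.norm_le_abs_re_add_abs_im z
        _ ≤ (|a|+|b|) + |ε₁| := by
            have h4 : |z.re| ≤ |a| + |b| := abs_le.mpr
              ⟨by cases abs_cases a <;> cases abs_cases b <;> [skip;skip;skip;skip] <;> linarith [h1.1, h1.2],
               by cases abs_cases a <;> cases abs_cases b <;> linarith [h1.1, h1.2]⟩
            have h5 : |z.im| ≤ |ε₁| := abs_le.mpr
              ⟨by cases abs_cases ε₁ <;> linarith, by cases abs_cases ε₁ <;> linarith⟩
            linarith
        _ = |a|+|b|+|ε₁| := by ring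
  have hDne : ((a:ℂ)) ∈ D := by
    refine ⟨?_, ?_, ?_⟩ <;> simp [Set.mem_Icc, hab, le_of_lt hε₁]
  set S : Set ℂ := Z '' D with hS
  have hSc : IsCompact S := hDcomp.image_of_continuousOn hZcont
  have hSne : S.Nonempty := ⟨Z a, Set.mem_image_of_mem Z hDne⟩
  obtain ⟨s₀, hs₀S, hmin⟩ := hSc.exists_isMinOn hSne Complex.continuous_im.continuousOn
  set τ : ℝ := s₀.im with hτdef
  have hτ : 0 < τ := by
    obtain ⟨lam₀, hlam₀, he⟩ := hs₀S
    rw [hτdef, ← he]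
    exact hZim lam₀ hlam₀
  have hs1 : ∀ s ∈ S, τ ≤ s.im := fun s hs => hmin hs
  obtain ⟨r₀, hr₀⟩ := hSc.isBounded.subset_closedBall 0
  set R : ℝ := |r₀| with hRdef
  have hsR : ∀ s ∈ S, ‖s‖ ≤ R := by
    intro s hs
    have := hr₀ hs
    simp only [Metric.mem_closedBall, Complex.dist_eq, sub_zero] at this
    exact this.trans (le_abs_self _)
  set L : ℝ := |a| + |b| + |ε₁| with hLdef
  have hL0 : 0 ≤ L := by positivity
  have hLbound : ∀ lam ∈ strip (Set.Icc a b) ε₁, ‖lam‖ ≤ L := by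
    rintro lam ⟨h1, h2, h3⟩
    calc ‖lam‖ ≤ |lam.re| + |lam.im| := Complex.norm_le_abs_re_add_abs_im lam
      _ ≤ (|a|+|b|) + |ε₁| := by
          have h4 : |lam.re| ≤ |a| + |b| := abs_le.mpr
            ⟨by cases abs_cases a <;> cases abs_cases b <;> linarith [h1.1, h1.2],
             by cases abs_cases a <;> cases abs_cases b <;> linarith [h1.1, h1.2]⟩
          have h5 : |lam.im| ≤ |ε₁| := abs_le.mpr
            ⟨by cases abs_cases ε₁ <;> linarith, by cases abs_cases ε₁ <;> linarith⟩
          linarith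
      _ = L := by rw [hLdef]
  -- constants
  set A : ℝ := (2*R^2 + 8*R^2*(R+1/τ)^2/τ^2) * ((2 + 8*(2*(L+1)^2+2)/τ^2) + 1) with hA
  set A' : ℝ := (2*R^2 + 8*R^2*(R+1/τ)^2/τ^2) * ((3 + 12*(2*(L+R)^2+2)/τ^2) + 1) with hA'
  have hA0 : 0 ≤ A := by rw [hA]; positivity
  have hA'0 : 0 ≤ A' := by rw [hA']; positivity
  set M : ℕ := m + n + 1 with hM
  set G : ℝ := A' * (A+1)^(m+n) + 1 with hG
  have hG1 : 1 ≤ G := by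
    have h0 : 0 ≤ A' * (A+1)^(m+n) := mul_nonneg hA'0 (pow_nonneg (by linarith) _)
    rw [hG]; linarith
  set C : ℝ := 64 * G^2 * 4^M with hC
  have hGpos : (0:ℝ) < G := lt_of_lt_of_le one_pos hG1
  have hCpos : (0:ℝ) < C := by
    rw [hC]
    exact mul_pos (mul_pos (by norm_num) (pow_pos hGpos 2)) (pow_pos (by norm_num) M)
  clear_value τ R L A A' G C M
  refine ⟨ε₁, hε₁, le_refl _, C, hCpos,
    {z : ℂ × ℂ | τ/4 ≤ z.1.im ∧ τ/4 ≤ z.2.im ∧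
      ‖z.1‖ ≤ 3*R+1 ∧ ‖z.2‖ ≤ 3*R+1}, ?_, ?_, ?_⟩
  · -- K compact
    apply Metric.isCompact_of_isClosed_isBounded
    · exact (isClosed_le continuous_const (Complex.continuous_im.comp continuous_fst)).inter
        ((isClosed_le continuous_const (Complex.continuous_im.comp continuous_snd)).inter
        ((isClosed_le (continuous_norm.comp continuous_fst) continuous_const).inter
        (isClosed_le (continuous_norm.comp continuous_snd) continuous_const)))
    · apply Bornology.IsBounded.subset
        ((Metric.isBounded_closedBall (x := (0:ℂ)) (r := 3*R+1)).prod
         (Metric.isBounded_closedBall (x := (0:ℂ)) (r := 3*R+1)))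
      rintro ⟨z1, z2⟩ ⟨_, _, h3, h4⟩
      constructor <;> simp [Complex.dist_eq] <;> assumption
  · -- K ⊆ ℍ × ℍ
    rintro ⟨z1, z2⟩ ⟨h1, h2, _, _⟩
    exact ⟨lt_of_lt_of_le (by positivity) h1, lt_of_lt_of_le (by positivity) h2⟩
  · -- main estimate
    intro z₁ z₂ hz₁ hz₂ hK q lam hmem
    have hmemD : lam ∈ D := ⟨hmem.1, hmem.2.1.le, hmem.2.2⟩
    set s : ℂ := Z lam with hsdef
    have hsS : s ∈ S := Set.mem_image_of_mem Z hmemD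
    have hsτ : τ ≤ s.im := hs1 s hsS
    have hsRR : ‖s‖ ≤ R := hsR s hsS
    have hs : 0 < s.im := lt_of_lt_of_le hτ hsτ
    have hlamim : 0 < lam.im := hmem.2.1
    have hlamL : ‖lam‖ ≤ L := hLbound lam hmem
    set Q : ℝ := ∏ i ∈ Finset.range M, (1 + |q i| ^ (2 * r)) with hQ
    set P : ℝ := ∏ i ∈ Finset.range M, (1 + (q i)^2) with hP
    have hone : ∀ i, (1:ℝ) ≤ 1 + (q i)^2 := fun i => le_add_of_nonneg_right (sq_nonneg _)
    have hP1 : 1 ≤ P := by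
      rw [hP]
      calc (1:ℝ) = ∏ i ∈ (∅ : Finset ℕ), (1 + (q i)^2) := by simp
        _ ≤ ∏ i ∈ Finset.range M, (1 + (q i)^2) :=
            prod_subset_le _ _ _ (Finset.empty_subset _) hone
    have hP0 : 0 ≤ P := by linarith
    -- key bound for a single phiMap value
    have key : ∀ x y : ℂ, 0 < x.im → 0 < y.im →
        wt s (phiMap m n lam q x y) ^ r ≤
          16 * G^2 * (4^M * Q) * ((wt s x)^r + (wt s y)^r + 1) := by
      intro x y hx hy
      set u : ℂ := phiIter lam q n x with hu
      set v : ℂ := phiIter lam (fun i => q (n + i)) m y with hv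
      obtain ⟨huim, hubd⟩ := chain τ R L hτ hL0 s lam hsτ hsRR hlamim hlamL q n x hx
      obtain ⟨hvim, hvbd⟩ := chain τ R L hτ hL0 s lam hsτ hsRR hlamim hlamL
        (fun i => q (n + i)) m y hy
      rw [← hu] at huim hubd
      rw [← hv] at hvim hvbd
      rw [← hA] at hubd hvbd
      have hphi : phiMap m n lam q x y = -1/(u + v + lam - ((q (n+m) : ℝ) : ℂ)) := rfl
      have hfs := final_step τ R L hτ hL0 s lam hsτ hsRR hlamim hlamL (q (n+m)) u v huim hvim
      rw [← hphi, ← hA'] at hfs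
      have hphiim : 0 < (phiMap m n lam q x y).im := by
        rw [hphi]
        apply im_neg_inv
        have : (u + v + lam - ((q (n+m):ℝ):ℂ)).im = u.im + v.im + lam.im := by
          simp only [Complex.sub_im, Complex.add_im, Complex.ofReal_im]; ring
        rw [this]; positivity
      clear_value u v
      -- partial products absorbed into P
      have hsub1 : (1 + (q (n+m))^2) * (∏ i ∈ Finset.range n, (1 + (q i)^2)) ≤ P := by
        have hnot : n+m ∉ Finset.range n := by simp
        have e1 : (1 + (q (n+m))^2) * (∏ i ∈ Finset.range n, (1 + (q i)^2))
            = ∏ i ∈ insert (n+m) (Finset.range n), (1 + (q i)^2) :=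
          (Finset.prod_insert (f := fun i => 1 + (q i)^2) hnot).symm
        rw [e1, hP]
        apply prod_subset_le _ _ _ _ hone
        intro i hi
        simp only [Finset.mem_insert, Finset.mem_range] at hi ⊢
        rw [hM]; omega
      have hsub2 : (1 + (q (n+m))^2) * (∏ i ∈ Finset.range m, (1 + (q (n+i))^2)) ≤ P := by
        have e0 : (∏ i ∈ Finset.range m, (1 + (q (n+i))^2))
            = ∏ i ∈ Finset.Ico n (n+m), (1 + (q i)^2) := by
          rw [Finset.prod_Ico_eq_prod_range]
          simp
        have hnot : n+m ∉ Finset.Ico n (n+m) := by simp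
        have e1 : (1 + (q (n+m))^2) * (∏ i ∈ Finset.Ico n (n+m), (1 + (q i)^2))
            = ∏ i ∈ insert (n+m) (Finset.Ico n (n+m)), (1 + (q i)^2) :=
          (Finset.prod_insert (f := fun i => 1 + (q i)^2) hnot).symm
        rw [e0, e1, hP]
        apply prod_subset_le _ _ _ _ hone
        intro i hi
        simp only [Finset.mem_insert, Finset.mem_Ico, Finset.mem_range] at hi ⊢
        rw [hM]; omega
      have hwx0 : 0 ≤ wt s x := wt_nonneg' s x hs hx
      have hwy0 : 0 ≤ wt s y := wt_nonneg' s y hs hy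
      have hwu0 : 0 ≤ wt s u := wt_nonneg' s u hs huim
      have hwv0 : 0 ≤ wt s v := wt_nonneg' s v hs hvim
      have hpow1 : (A+1)^n ≤ (A+1)^(m+n) := pow_le_pow_right₀ (by linarith) (by omega)
      have hpow2 : (A+1)^m ≤ (A+1)^(m+n) := pow_le_pow_right₀ (by linarith) (by omega)
      have hbig : wt s (phiMap m n lam q x y) ≤ G * P * (wt s x + wt s y + 2) := by
        have step2 : wt s u + wt s v + 1 ≤
            (A+1)^n * (∏ i ∈ Finset.range n, (1 + (q i)^2)) * (wt s x + 1)
            + (A+1)^m * (∏ i ∈ Finset.range m, (1 + (q (n+i))^2)) * (wt s y + 1) := by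
          linarith [hubd, hvbd]
        have step3 : wt s (phiMap m n lam q x y) ≤ A' * (1 + (q (n+m))^2) *
            ((A+1)^n * (∏ i ∈ Finset.range n, (1 + (q i)^2)) * (wt s x + 1)
            + (A+1)^m * (∏ i ∈ Finset.range m, (1 + (q (n+i))^2)) * (wt s y + 1)) := by
          refine hfs.trans ?_
          apply mul_le_mul_of_nonneg_left step2
          exact mul_nonneg hA'0 (le_add_of_nonneg_right (sq_nonneg _) |>.trans' zero_le_one)
        refine step3.trans ?_
        have t1 : A' * (1 + (q (n+m))^2) *
            ((A+1)^n * (∏ i ∈ Finset.range n, (1 + (q i)^2)) * (wt s x + 1))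
            ≤ A' * (A+1)^(m+n) * P * (wt s x + 1) := by
          have e : A' * (1 + (q (n+m))^2) *
              ((A+1)^n * (∏ i ∈ Finset.range n, (1 + (q i)^2)) * (wt s x + 1))
              = A' * ((A+1)^n) * ((1 + (q (n+m))^2) * (∏ i ∈ Finset.range n, (1 + (q i)^2))) * (wt s x + 1) := by
            ring
          rw [e]
          have h1 : (0:ℝ) ≤ wt s x + 1 := by linarith
          apply mul_le_mul_of_nonneg_right _ h1
          calc A' * ((A+1)^n) * ((1 + (q (n+m))^2) * (∏ i ∈ Finset.range n, (1 + (q i)^2)))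
              ≤ A' * ((A+1)^n) * P := by
                apply mul_le_mul_of_nonneg_left hsub1
                exact mul_nonneg hA'0 (pow_nonneg (by linarith) _)
            _ ≤ A' * ((A+1)^(m+n)) * P := by
                apply mul_le_mul_of_nonneg_right _ hP0
                exact mul_le_mul_of_nonneg_left hpow1 hA'0
        have t2 : A' * (1 + (q (n+m))^2) *
            ((A+1)^m * (∏ i ∈ Finset.range m, (1 + (q (n+i))^2)) * (wt s y + 1))
            ≤ A' * (A+1)^(m+n) * P * (wt s y + 1) := by
          have e : A' * (1 + (q (n+m))^2) *
              ((A+1)^m * (∏ i ∈ Finset.range m, (1 + (q (n+i))^2)) * (wt s y + 1))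
              = A' * ((A+1)^m) * ((1 + (q (n+m))^2) * (∏ i ∈ Finset.range m, (1 + (q (n+i))^2))) * (wt s y + 1) := by
            ring
          rw [e]
          have h1 : (0:ℝ) ≤ wt s y + 1 := by linarith
          apply mul_le_mul_of_nonneg_right _ h1
          calc A' * ((A+1)^m) * ((1 + (q (n+m))^2) * (∏ i ∈ Finset.range m, (1 + (q (n+i))^2)))
              ≤ A' * ((A+1)^m) * P := by
                apply mul_le_mul_of_nonneg_left hsub2
                exact mul_nonneg hA'0 (pow_nonneg (by linarith) _)
            _ ≤ A' * ((A+1)^(m+n)) * P := by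
                apply mul_le_mul_of_nonneg_right _ hP0
                exact mul_le_mul_of_nonneg_left hpow2 hA'0
        have hGP : A' * (A+1)^(m+n) * P ≤ G * P := by
          apply mul_le_mul_of_nonneg_right _ hP0
          rw [hG]; linarith
        have b1 := mul_le_mul_of_nonneg_right hGP (by linarith : (0:ℝ) ≤ wt s x + 1)
        have b2 := mul_le_mul_of_nonneg_right hGP (by linarith : (0:ℝ) ≤ wt s y + 1)
        linarith [t1, t2, b1, b2]
      -- now raise to the power r
      have hwphi0 : 0 ≤ wt s (phiMap m n lam q x y) := wt_nonneg' s _ hs hphiim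
      have hG0 : (0:ℝ) ≤ G := by linarith
      have hGP0 : (0:ℝ) ≤ G * P := mul_nonneg hG0 hP0
      have hsum0 : (0:ℝ) ≤ wt s x + wt s y + 2 := by linarith
      have h1 : wt s (phiMap m n lam q x y) ^ r ≤ (G * P * (wt s x + wt s y + 2)) ^ r :=
        Real.rpow_le_rpow hwphi0 hbig hr0
      have h2 : (G * P * (wt s x + wt s y + 2)) ^ r
          = G^r * P^r * (wt s x + wt s y + 2)^r := by
        rw [Real.mul_rpow hGP0 hsum0, Real.mul_rpow hG0 hP0]
      have h3 : G^r ≤ G^2 := by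
        have := Real.rpow_le_rpow_of_exponent_le hG1 hr2
        rwa [show (G:ℝ)^(2:ℝ) = G^2 from by
          rw [show (2:ℝ) = ((2:ℕ):ℝ) from by norm_num, Real.rpow_natCast]] at this
      have h4 : P^r ≤ 4^M * Q := by
        rw [hP, hQ]
        exact prod_rpow_le q M r hr1 hr2
      have h5 : (wt s x + wt s y + 2)^r ≤ 16*((wt s x)^r + (wt s y)^r + 1) :=
        sum_rpow_le _ _ r hwx0 hwy0 hr1 hr2
      have hg0 : 0 ≤ G^r := Real.rpow_nonneg hG0 _
      have hp0 : 0 ≤ P^r := Real.rpow_nonneg hP0 _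
      have hs0' : 0 ≤ (wt s x + wt s y + 2)^r := Real.rpow_nonneg hsum0 _
      have hq0 : 0 ≤ 4^M * Q := by
        apply mul_nonneg (by positivity)
        rw [hQ]
        exact Finset.prod_nonneg fun i _ => by positivity
      calc wt s (phiMap m n lam q x y) ^ r
          ≤ G^r * P^r * (wt s x + wt s y + 2)^r := h1.trans_eq h2
        _ ≤ G^2 * (4^M * Q) * (16*((wt s x)^r + (wt s y)^r + 1)) := by
            apply mul_le_mul
            · exact mul_le_mul h3 h4 hp0 (sq_nonneg G)
            · exact h5.trans (le_refl _)
            · exact hs0'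
            · exact mul_nonneg (sq_nonneg G) hq0
        _ = 16 * G^2 * (4^M * Q) * ((wt s x)^r + (wt s y)^r + 1) := by ring
    -- denominator bound from being outside K
    have hor : (z₁.im < τ/4 ∨ 3*R+1 < ‖z₁‖)
        ∨ (z₂.im < τ/4 ∨ 3*R+1 < ‖z₂‖) := by
      by_contra hcon
      push_neg at hcon
      exact hK ⟨hcon.1.1, hcon.2.1, hcon.1.2, hcon.2.2⟩
    have hden1 : 1 ≤ (wt s z₁)^r + (wt s z₂)^r := by
      have hw10 : 0 ≤ wt s z₁ := wt_nonneg' s z₁ hs hz₁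
      have hw20 : 0 ≤ wt s z₂ := wt_nonneg' s z₂ hs hz₂
      have hr10 : 0 ≤ (wt s z₁)^r := Real.rpow_nonneg hw10 _
      have hr20 : 0 ≤ (wt s z₂)^r := Real.rpow_nonneg hw20 _
      rcases hor with h | h
      · have h1 : 1 ≤ wt s z₁ := wt_ge_one τ R hτ s z₁ hsτ hsRR hz₁ h
        have : (1:ℝ) = 1^r := (Real.one_rpow r).symm
        calc (1:ℝ) = 1^r := this
          _ ≤ (wt s z₁)^r := Real.rpow_le_rpow (by norm_num) h1 hr0
          _ ≤ (wt s z₁)^r + (wt s z₂)^r := by linarith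
      · have h1 : 1 ≤ wt s z₂ := wt_ge_one τ R hτ s z₂ hsτ hsRR hz₂ h
        calc (1:ℝ) = 1^r := (Real.one_rpow r).symm
          _ ≤ (wt s z₂)^r := Real.rpow_le_rpow (by norm_num) h1 hr0
          _ ≤ (wt s z₁)^r + (wt s z₂)^r := by linarith
    -- finish
    have hQ0 : 0 ≤ Q := by
      rw [hQ]; exact Finset.prod_nonneg fun i _ => by positivity
    have k1 := key z₁ z₂ hz₁ hz₂
    have k2 := key z₂ z₁ hz₂ hz₁
    have hnum : wt s (phiMap m n lam q z₁ z₂) ^ r + wt s (phiMap m n lam q z₂ z₁) ^ r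
        ≤ C * Q * ((wt s z₁)^r + (wt s z₂)^r) := by
      have e2 : (wt s z₂)^r + (wt s z₁)^r + 1 = (wt s z₁)^r + (wt s z₂)^r + 1 := by ring
      rw [e2] at k2
      have habs : (wt s z₁)^r + (wt s z₂)^r + 1 ≤ 2 * ((wt s z₁)^r + (wt s z₂)^r) := by
        linarith
      have hq0' : (0:ℝ) ≤ 4^M * Q := mul_nonneg (by positivity) hQ0
      have hcoef : (0:ℝ) ≤ 16 * G^2 * (4^M * Q) :=
        mul_nonneg (mul_nonneg (by norm_num) (sq_nonneg G)) hq0'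
      have k1' := k1.trans (mul_le_mul_of_nonneg_left habs hcoef)
      have k2' := k2.trans (mul_le_mul_of_nonneg_left habs hcoef)
      calc wt s (phiMap m n lam q z₁ z₂) ^ r + wt s (phiMap m n lam q z₂ z₁) ^ r
          ≤ 2 * (16 * G^2 * (4^M * Q) * (2 * ((wt s z₁)^r + (wt s z₂)^r))) := by linarith
        _ = C * Q * ((wt s z₁)^r + (wt s z₂)^r) := by rw [hC]; ring
    show muP m n p s lam q z₁ z₂ ≤ C * Q
    rw [muP]
    rw [div_le_iff₀ (by linarith : (0:ℝ) < wt s z₁ ^ (1+p) + wt s z₂ ^ (1+p))]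
    calc wt s (phiMap m n lam q z₁ z₂) ^ (1+p) + wt s (phiMap m n lam q z₂ z₁) ^ (1+p)
        ≤ C * Q * ((wt s z₁)^(1+p) + (wt s z₂)^(1+p)) := hnum
      _ = C * Q * (wt s z₁ ^ (1+p) + wt s z₂ ^ (1+p)) := by ring

end
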